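/- Stochastic Sewing Lemma (uniqueness up to modification): Let (Ω, F, P) be a probability space with a filtration (F_t)_{t∈[0,T]}, T > 0, p ∈ [2,∞), d ≥ 1, and let A : Δ₂ → L^p(Ω; ℝ^d) with A_{t,t} = 0 and A_{s,t} F_t-measurable for all s ≤ t. Let ε₁, ε₂ > 0 and C₁, C₂ ≥ 0. Suppose 𝒜 and 𝒜' are (F_t)-adapted processes with values in L^p(Ω; ℝ^d), with 𝒜_0 = 𝒜'_0 = 0 almost surely, and such that for i ∈ {1,2} and all 0 ≤ s ≤ t ≤ T: ‖𝒜_t − 𝒜_s − A_{s,t}‖_{L^p(Ω)} ≤ C_i (t−s)^{1/2+ε₂}, ‖E[𝒜_t − 𝒜_s − A_{s,t} | F_s]‖_{L^p(Ω)} ≤ C_i (t−s)^{1+ε₁} (with C₁ used for 𝒜 and C₂ for 𝒜'). Then 𝒜' is a modification of 𝒜: for every t ∈ [0,T], 𝒜_t = 𝒜'_t almost surely. -/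

import Mathlib

open MeasureTheory

section helpers
variable {Ω : Type*} {m m0 : MeasurableSpace Ω} {μ : Measure Ω}

lemma ssl_coeFn_sum {E : Type*} [NormedAddCommGroup E] {q : ENNReal} (s : Finset ℕ)
    (f : ℕ → Lp E q μ) :
    (↑↑(∑ i ∈ s, f i) : Ω → E) =ᵐ[μ] fun ω => ∑ i ∈ s, (f i : Ω → E) ω := by
  classical
  induction s using Finset.induction_on with
  | empty => simp only [Finset.sum_empty]; exact Lp.coeFn_zero E q μ
  | insert a s' hni ih =>
    rw [Finset.sum_insert hni]
    filter_upwards [Lp.coeFn_add (f a) (∑ i ∈ s', f i), ih] with ω h1 h2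
    rw [h1, Pi.add_apply, h2, Finset.sum_insert hni]

lemma ssl_ortho [IsProbabilityMeasure μ] (hm : m ≤ m0) {d : ℕ}
    {f g : Ω → EuclideanSpace ℝ (Fin d)}
    (hf : MemLp f 2 μ) (hg : MemLp g 2 μ) (hgm : StronglyMeasurable[m] g)
    (hfc : μ[f|m] =ᵐ[μ] 0) :
    (inner ℝ (MemLp.toLp g hg) (MemLp.toLp f hf) : ℝ) = 0 := by
  haveI : SigmaFinite (μ.trim hm) := by infer_instance
  set F : Lp (EuclideanSpace ℝ (Fin d)) 2 μ := hf.toLp f with hF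
  set G : Lp (EuclideanSpace ℝ (Fin d)) 2 μ := hg.toLp g with hG
  have hGm : AEStronglyMeasurable[m] (G : Ω → EuclideanSpace ℝ (Fin d)) μ :=
    ⟨g, hgm, hg.coeFn_toLp⟩
  have hCF : (((condExpL2 (EuclideanSpace ℝ (Fin d)) ℝ hm) F :
      Lp (EuclideanSpace ℝ (Fin d)) 2 μ) : Ω → EuclideanSpace ℝ (Fin d)) =ᵐ[μ] 0 := by
    have h1 : (((condExpL2 (EuclideanSpace ℝ (Fin d)) ℝ hm) F :
        Lp (EuclideanSpace ℝ (Fin d)) 2 μ) : Ω → EuclideanSpace ℝ (Fin d)) =ᵐ[μ] μ[f|m] := by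
      refine ae_eq_condExp_of_forall_setIntegral_eq hm (hf.integrable one_le_two)
        (fun s hs hμs => integrableOn_condExpL2_of_measure_ne_top hm hμs.ne F)
        (fun s hs hμs => ?_) (aestronglyMeasurable_condExpL2 hm F)
      rw [integral_condExpL2_eq hm F hs hμs.ne]
      exact setIntegral_congr_ae (hm s hs) ((hf.coeFn_toLp).mono fun ω hω _ => hω)
    exact h1.trans hfc
  have key := inner_condExpL2_eq_inner_fun (𝕜 := ℝ) hm F G hGm
  have hz : (inner ℝ (((condExpL2 (EuclideanSpace ℝ (Fin d)) ℝ hm) F :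
      Lp (EuclideanSpace ℝ (Fin d)) 2 μ)) G : ℝ) = 0 := by
    rw [L2.inner_def]
    have hae : (fun ω => (inner ℝ ((((condExpL2 (EuclideanSpace ℝ (Fin d)) ℝ hm) F :
        Lp (EuclideanSpace ℝ (Fin d)) 2 μ) : Ω → EuclideanSpace ℝ (Fin d)) ω)
        ((G : Ω → EuclideanSpace ℝ (Fin d)) ω) : ℝ)) =ᵐ[μ] fun _ => (0:ℝ) := by
      filter_upwards [hCF] with ω hω
      simp only [hω, Pi.zero_apply, inner_zero_left]
    rw [integral_congr_ae hae, integral_zero]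
  rw [real_inner_comm, ← key, hz]

lemma ssl_main [IsProbabilityMeasure μ] (ℱ : Filtration ℝ m0) {d : ℕ}
    (D : ℝ → Ω → EuclideanSpace ℝ (Fin d)) (t : ℝ) (ht0 : 0 ≤ t)
    (a b K : ℝ) (ha : 0 < a) (hb : 0 < b) (hK : 0 ≤ K)
    (hDmeas : ∀ s, 0 ≤ s → s ≤ t → StronglyMeasurable[ℱ s] (D s))
    (hDmem : ∀ s, 0 ≤ s → s ≤ t → MemLp (D s) 2 μ)
    (hD0 : D 0 =ᵐ[μ] 0)
    (hbd : ∀ s u, 0 ≤ s → s ≤ u → u ≤ t →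
      eLpNorm (fun ω => D u ω - D s ω) 2 μ ≤ ENNReal.ofReal (K * (u - s) ^ (1/2 + a)))
    (hcond : ∀ s u, 0 ≤ s → s ≤ u → u ≤ t →
      eLpNorm (μ[fun ω => D u ω - D s ω | ℱ s]) 2 μ ≤ ENNReal.ofReal (K * (u - s) ^ (1 + b))) :
    D t =ᵐ[μ] 0 := by
  classical
  have hDtmem : MemLp (D t) 2 μ := hDmem t ht0 le_rfl
  set N : ℝ := ‖hDtmem.toLp (D t)‖ with hNdef
  -- the key per-n estimate
  have key : ∀ n : ℕ, 1 ≤ n →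
      N ≤ K * t ^ (1/2 + a) * (n : ℝ) ^ (-a) + 2 * K * t ^ (1 + b) * (n : ℝ) ^ (-b) := by
    intro n hn
    have hn0 : (0:ℝ) < n := by exact_mod_cast hn
    set τ : ℕ → ℝ := fun i => i * t / n with hτdef
    have hτ0 : ∀ i, 0 ≤ τ i := fun i =>
      div_nonneg (mul_nonneg (Nat.cast_nonneg i) ht0) hn0.le
    have hτle : ∀ {i j : ℕ}, i ≤ j → τ i ≤ τ j := by
      intro i j h
      have : (i:ℝ) ≤ j := Nat.cast_le.mpr h
      simp only [hτdef]
      gcongr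
    have hτn : τ n = t := by
      simp only [hτdef]; field_simp
    have hτt : ∀ i, i ≤ n → τ i ≤ t := fun i hi => hτn ▸ hτle hi
    have hτd : ∀ i : ℕ, τ (i+1) - τ i = t / n := by
      intro i; simp only [hτdef]; push_cast; field_simp; ring
    set x : ℝ := (t / n) ^ (1/2 + a) with hxdef
    set y : ℝ := (t / n) ^ (1 + b) with hydef
    have hx0 : 0 ≤ x := Real.rpow_nonneg (div_nonneg ht0 hn0.le) _
    have hy0 : 0 ≤ y := Real.rpow_nonneg (div_nonneg ht0 hn0.le) _
    -- increments and their compensators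
    have hmemδ : ∀ i, i < n → MemLp (fun ω => D (τ (i+1)) ω - D (τ i) ω) 2 μ := fun i hi =>
      (hDmem _ (hτ0 _) (hτt _ hi)).sub (hDmem _ (hτ0 _) (hτt _ hi.le))
    have hbδ : ∀ i, i < n →
        eLpNorm (fun ω => D (τ (i+1)) ω - D (τ i) ω) 2 μ ≤ ENNReal.ofReal (K * x) := by
      intro i hi
      have := hbd (τ i) (τ (i+1)) (hτ0 i) (hτle i.le_succ) (hτt _ hi)
      rwa [hτd i] at this
    have hbg : ∀ i, i < n →
        eLpNorm (μ[fun ω => D (τ (i+1)) ω - D (τ i) ω | ℱ (τ i)]) 2 μ ≤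
          ENNReal.ofReal (K * y) := by
      intro i hi
      have := hcond (τ i) (τ (i+1)) (hτ0 i) (hτle i.le_succ) (hτt _ hi)
      rwa [hτd i] at this
    have hmemg : ∀ i, i < n →
        MemLp (μ[fun ω => D (τ (i+1)) ω - D (τ i) ω | ℱ (τ i)]) 2 μ := fun i hi =>
      ⟨(stronglyMeasurable_condExp.mono (ℱ.le _)).aestronglyMeasurable,
        lt_of_le_of_lt (hbg i hi) ENNReal.ofReal_lt_top⟩
    set M : ℕ → Lp (EuclideanSpace ℝ (Fin d)) 2 μ := fun i =>
      if hi : i < n then ((hmemδ i hi).sub (hmemg i hi)).toLp _ else 0 with hMdef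
    set G : ℕ → Lp (EuclideanSpace ℝ (Fin d)) 2 μ := fun i =>
      if hi : i < n then (hmemg i hi).toLp _ else 0 with hGdef
    -- norm bounds
    have hnormM : ∀ i ∈ Finset.range n, ‖M i‖ ≤ K * x + K * y := by
      intro i hi
      rw [Finset.mem_range] at hi
      rw [hMdef]
      simp only [dif_pos hi]
      rw [Lp.norm_toLp]
      have h1 : eLpNorm ((fun ω => D (τ (i+1)) ω - D (τ i) ω) -
          μ[fun ω => D (τ (i+1)) ω - D (τ i) ω | ℱ (τ i)]) 2 μ ≤
          ENNReal.ofReal (K * x) + ENNReal.ofReal (K * y) :=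
        le_trans (eLpNorm_sub_le (hmemδ i hi).aestronglyMeasurable
          (hmemg i hi).aestronglyMeasurable one_le_two)
          (add_le_add (hbδ i hi) (hbg i hi))
      rw [← ENNReal.ofReal_add (mul_nonneg hK hx0) (mul_nonneg hK hy0)] at h1
      exact ENNReal.toReal_le_of_le_ofReal
        (add_nonneg (mul_nonneg hK hx0) (mul_nonneg hK hy0)) h1
    have hnormG : ∀ i ∈ Finset.range n, ‖G i‖ ≤ K * y := by
      intro i hi
      rw [Finset.mem_range] at hi
      rw [hGdef]
      simp only [dif_pos hi]
      rw [Lp.norm_toLp]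
      exact ENNReal.toReal_le_of_le_ofReal (mul_nonneg hK hy0) (hbg i hi)
    -- orthogonality
    have aux : ∀ i j : ℕ, i < n → j < n → i < j → (inner ℝ (M i) (M j) : ℝ) = 0 := by
      intro i j hi hj hij
      rw [hMdef]
      simp only [dif_pos hi, dif_pos hj]
      refine ssl_ortho (ℱ.le (τ j)) _ _ ?_ ?_
      · refine StronglyMeasurable.sub ?_ ?_
        · exact ((hDmeas _ (hτ0 _) (hτt _ hi)).mono (ℱ.mono (hτle hij))).sub
            ((hDmeas _ (hτ0 _) (hτt _ hi.le)).mono (ℱ.mono (hτle hij.le)))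
        · exact stronglyMeasurable_condExp.mono (ℱ.mono (hτle hij.le))
      · refine (condExp_sub ((hmemδ j hj).integrable one_le_two) integrable_condExp _).trans ?_
        rw [condExp_of_stronglyMeasurable (ℱ.le (τ j)) stronglyMeasurable_condExp
          integrable_condExp]
        simp
    have horth : ∀ i ∈ Finset.range n, ∀ j ∈ Finset.range n, j ≠ i →
        (inner ℝ (M i) (M j) : ℝ) = 0 := by
      intro i hi j hj hne
      rcases hne.lt_or_gt with h | h
      · rw [real_inner_comm]
        exact aux j i (Finset.mem_range.mp hj) (Finset.mem_range.mp hi) h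
      · exact aux i j (Finset.mem_range.mp hi) (Finset.mem_range.mp hj) h
    -- decomposition of D t
    set S := ∑ i ∈ Finset.range n, M i with hSdef
    set Gs := ∑ i ∈ Finset.range n, G i with hGsdef
    have hMco : ∀ᵐ ω ∂μ, ∀ i ∈ Finset.range n, (M i : Ω → EuclideanSpace ℝ (Fin d)) ω =
        (D (τ (i+1)) ω - D (τ i) ω) -
          (μ[fun ω => D (τ (i+1)) ω - D (τ i) ω | ℱ (τ i)]) ω := by
      rw [Filter.eventually_all_finset]
      intro i hi
      rw [Finset.mem_range] at hi
      rw [hMdef]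
      simp only [dif_pos hi]
      filter_upwards [MemLp.coeFn_toLp ((hmemδ i hi).sub (hmemg i hi))] with ω hω
      rw [hω]
      rfl
    have hGco : ∀ᵐ ω ∂μ, ∀ i ∈ Finset.range n, (G i : Ω → EuclideanSpace ℝ (Fin d)) ω =
        (μ[fun ω => D (τ (i+1)) ω - D (τ i) ω | ℱ (τ i)]) ω := by
      rw [Filter.eventually_all_finset]
      intro i hi
      rw [Finset.mem_range] at hi
      rw [hGdef]
      simp only [dif_pos hi]
      filter_upwards [MemLp.coeFn_toLp (hmemg i hi)] with ω hω
      rw [hω]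
    have hdecomp : hDtmem.toLp (D t) = S + Gs := by
      apply Lp.ext
      filter_upwards [hDtmem.coeFn_toLp, Lp.coeFn_add S Gs, ssl_coeFn_sum (Finset.range n) M,
        ssl_coeFn_sum (Finset.range n) G, hD0, hMco, hGco] with ω h1 h2 h3 h4 h5 h6 h7
      rw [h1, h2, Pi.add_apply, h3, h4]
      have hsum : (∑ i ∈ Finset.range n, (M i : Ω → EuclideanSpace ℝ (Fin d)) ω) +
          ∑ i ∈ Finset.range n, (G i : Ω → EuclideanSpace ℝ (Fin d)) ω
          = ∑ i ∈ Finset.range n, (D (τ (i+1)) ω - D (τ i) ω) := by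
        rw [← Finset.sum_add_distrib]
        refine Finset.sum_congr rfl fun i hi => ?_
        rw [h6 i hi, h7 i hi]
        abel
      rw [hsum, Finset.sum_range_sub (fun i => D (τ i) ω), hτn]
      have hτ00 : τ 0 = 0 := by simp [hτdef]
      rw [hτ00, h5]
      simp
    -- norm of the martingale part via orthogonality
    have hSsq : ‖S‖^2 = ∑ i ∈ Finset.range n, ‖M i‖^2 := by
      rw [← real_inner_self_eq_norm_sq, hSdef, sum_inner]
      refine Finset.sum_congr rfl fun i hi => ?_
      rw [inner_sum, Finset.sum_eq_single_of_mem i hi (fun j hj hji => horth i hi j hj hji),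
        real_inner_self_eq_norm_sq]
    set B : ℝ := K * x + K * y with hBdef
    have hB0 : 0 ≤ B := add_nonneg (mul_nonneg hK hx0) (mul_nonneg hK hy0)
    have hSle : ‖S‖ ≤ Real.sqrt n * B := by
      have hbnd : ∑ i ∈ Finset.range n, ‖M i‖^2 ≤ n * B^2 := by
        calc ∑ i ∈ Finset.range n, ‖M i‖^2 ≤ ∑ _i ∈ Finset.range n, B^2 :=
              Finset.sum_le_sum fun i hi => pow_le_pow_left₀ (norm_nonneg _) (hnormM i hi) 2
          _ = n * B^2 := by rw [Finset.sum_const, Finset.card_range, nsmul_eq_mul]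
      calc ‖S‖ = Real.sqrt (‖S‖^2) := (Real.sqrt_sq (norm_nonneg _)).symm
        _ ≤ Real.sqrt (n * B^2) := Real.sqrt_le_sqrt (by rw [hSsq]; exact hbnd)
        _ = Real.sqrt n * B := by rw [Real.sqrt_mul (Nat.cast_nonneg n), Real.sqrt_sq hB0]
    have hGsle : ‖Gs‖ ≤ n * (K * y) := by
      calc ‖Gs‖ ≤ ∑ i ∈ Finset.range n, ‖G i‖ := norm_sum_le _ _
        _ ≤ ∑ _i ∈ Finset.range n, (K * y) := Finset.sum_le_sum hnormG
        _ = n * (K * y) := by rw [Finset.sum_const, Finset.card_range, nsmul_eq_mul]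
    have hNle : N ≤ Real.sqrt n * B + n * (K * y) := by
      rw [hNdef, hdecomp]
      exact (norm_add_le S Gs).trans (add_le_add hSle hGsle)
    -- algebra with rpow
    have e1 : Real.sqrt n * x = t ^ (1/2 + a) * (n:ℝ) ^ (-a) := by
      rw [hxdef, Real.div_rpow ht0 hn0.le, Real.sqrt_eq_rpow]
      rw [show (-a) = 1/2 - (1/2 + a) by ring, Real.rpow_sub hn0]
      ring
    have e2 : (n:ℝ) * y = t ^ (1 + b) * (n:ℝ) ^ (-b) := by
      rw [hydef, Real.div_rpow ht0 hn0.le]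
      rw [show (-b) = 1 - (1 + b) by ring, Real.rpow_sub hn0, Real.rpow_one]
      ring
    have i1 : Real.sqrt n ≤ (n:ℝ) := by
      have h := Real.sqrt_le_sqrt
        (le_mul_of_one_le_left (Nat.cast_nonneg n) (show (1:ℝ) ≤ n by exact_mod_cast hn))
      rwa [Real.sqrt_mul_self (Nat.cast_nonneg n)] at h
    have hexp : Real.sqrt n * B + n * (K * y) =
        K * (Real.sqrt n * x) + K * (Real.sqrt n * y) + K * ((n:ℝ) * y) := by
      rw [hBdef]; ring
    have i2 : K * (Real.sqrt n * y) ≤ K * ((n:ℝ) * y) :=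
      mul_le_mul_of_nonneg_left (mul_le_mul_of_nonneg_right i1 hy0) hK
    calc N ≤ Real.sqrt n * B + n * (K * y) := hNle
      _ = K * (Real.sqrt n * x) + K * (Real.sqrt n * y) + K * ((n:ℝ) * y) := hexp
      _ ≤ K * (Real.sqrt n * x) + K * ((n:ℝ) * y) + K * ((n:ℝ) * y) := by linarith
      _ = K * t ^ (1/2 + a) * (n:ℝ) ^ (-a) + 2 * K * t ^ (1 + b) * (n:ℝ) ^ (-b) := by
          rw [e1, e2]; ring
  -- pass to the limit
  have h1 : Filter.Tendsto (fun n : ℕ => ((n:ℝ)) ^ (-a)) Filter.atTop (nhds 0) :=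
    (tendsto_rpow_neg_atTop ha).comp tendsto_natCast_atTop_atTop
  have h2 : Filter.Tendsto (fun n : ℕ => ((n:ℝ)) ^ (-b)) Filter.atTop (nhds 0) :=
    (tendsto_rpow_neg_atTop hb).comp tendsto_natCast_atTop_atTop
  have hto : Filter.Tendsto
      (fun n : ℕ => K * t ^ (1/2 + a) * (n:ℝ) ^ (-a) + 2 * K * t ^ (1 + b) * (n:ℝ) ^ (-b))
      Filter.atTop (nhds 0) := by
    have := ((h1.const_mul (K * t ^ (1/2 + a))).add (h2.const_mul (2 * K * t ^ (1 + b))))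
    simpa using this
  have hN0 : N ≤ 0 := ge_of_tendsto hto (Filter.eventually_atTop.mpr ⟨1, key⟩)
  have hNz : hDtmem.toLp (D t) = 0 := norm_eq_zero.mp (le_antisymm hN0 (norm_nonneg _))
  refine (hDtmem.coeFn_toLp).symm.trans ?_
  rw [hNz]
  exact Lp.coeFn_zero _ _ _


end helpers

/-- Stochastic Sewing Lemma (uniqueness up to modification): if two adapted `L^p`
processes `𝒜`, `𝒜'` start at `0` a.s. and both satisfy the a priori bounds
`‖𝒜_t − 𝒜_s − A_{s,t}‖_{L^p} ≤ Cᵢ (t−s)^{1/2+ε₂}` and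
`‖E[𝒜_t − 𝒜_s − A_{s,t} | F_s]‖_{L^p} ≤ Cᵢ (t−s)^{1+ε₁}` (with `C₁` for `𝒜` and `C₂`
for `𝒜'`), then `𝒜'` is a modification of `𝒜`: for every `t ∈ [0,T]`, `𝒜_t = 𝒜'_t`
almost surely. -/
theorem stochastic_sewing_uniqueness
    {Ω : Type*} {m0 : MeasurableSpace Ω} {μ : Measure Ω} [IsProbabilityMeasure μ]
    (T : ℝ) (hT : 0 < T) (ℱ : Filtration ℝ m0)
    (p : ℝ) (hp : 2 ≤ p) (d : ℕ) (hd : 1 ≤ d)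
    (ε₁ ε₂ C₁ C₂ : ℝ) (hε₁ : 0 < ε₁) (hε₂ : 0 < ε₂) (hC₁ : 0 ≤ C₁) (hC₂ : 0 ≤ C₂)
    (A : ℝ → ℝ → Ω → EuclideanSpace ℝ (Fin d))
    (hdiag : ∀ t ∈ Set.Icc (0 : ℝ) T, ∀ ω, A t t ω = 0)
    (hmeas : ∀ s t : ℝ, 0 ≤ s → s ≤ t → t ≤ T → StronglyMeasurable[ℱ t] (A s t))
    (hLp : ∀ s t : ℝ, 0 ≤ s → s ≤ t → t ≤ T → MemLp (A s t) (ENNReal.ofReal p) μ)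
    (𝒜 𝒜' : ℝ → Ω → EuclideanSpace ℝ (Fin d))
    (h𝒜meas : ∀ t ∈ Set.Icc (0 : ℝ) T, StronglyMeasurable[ℱ t] (𝒜 t))
    (h𝒜'meas : ∀ t ∈ Set.Icc (0 : ℝ) T, StronglyMeasurable[ℱ t] (𝒜' t))
    (h𝒜Lp : ∀ t ∈ Set.Icc (0 : ℝ) T, MemLp (𝒜 t) (ENNReal.ofReal p) μ)
    (h𝒜'Lp : ∀ t ∈ Set.Icc (0 : ℝ) T, MemLp (𝒜' t) (ENNReal.ofReal p) μ)
    (h𝒜0 : ∀ᵐ ω ∂μ, 𝒜 0 ω = 0) (h𝒜'0 : ∀ᵐ ω ∂μ, 𝒜' 0 ω = 0)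
    (h𝒜bd : ∀ s t : ℝ, 0 ≤ s → s ≤ t → t ≤ T →
      eLpNorm (fun ω => 𝒜 t ω - 𝒜 s ω - A s t ω) (ENNReal.ofReal p) μ ≤
        ENNReal.ofReal (C₁ * (t - s) ^ (1 / 2 + ε₂)))
    (h𝒜cond : ∀ s t : ℝ, 0 ≤ s → s ≤ t → t ≤ T →
      eLpNorm (μ[fun ω => 𝒜 t ω - 𝒜 s ω - A s t ω | ℱ s]) (ENNReal.ofReal p) μ ≤
        ENNReal.ofReal (C₁ * (t - s) ^ (1 + ε₁)))
    (h𝒜'bd : ∀ s t : ℝ, 0 ≤ s → s ≤ t → t ≤ T →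
      eLpNorm (fun ω => 𝒜' t ω - 𝒜' s ω - A s t ω) (ENNReal.ofReal p) μ ≤
        ENNReal.ofReal (C₂ * (t - s) ^ (1 / 2 + ε₂)))
    (h𝒜'cond : ∀ s t : ℝ, 0 ≤ s → s ≤ t → t ≤ T →
      eLpNorm (μ[fun ω => 𝒜' t ω - 𝒜' s ω - A s t ω | ℱ s]) (ENNReal.ofReal p) μ ≤
        ENNReal.ofReal (C₂ * (t - s) ^ (1 + ε₁))) :
    ∀ t ∈ Set.Icc (0 : ℝ) T, ∀ᵐ ω ∂μ, 𝒜 t ω = 𝒜' t ω := by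
  intro t ht
  obtain ⟨ht0, htT⟩ := ht
  have h1p : (1 : ENNReal) ≤ ENNReal.ofReal p := by
    rw [← ENNReal.ofReal_one]
    exact ENNReal.ofReal_le_ofReal (by linarith)
  have h2p : (2 : ENNReal) ≤ ENNReal.ofReal p := by
    rw [← ENNReal.ofReal_ofNat 2]
    exact ENNReal.ofReal_le_ofReal hp
  have hC : 0 ≤ C₁ + C₂ := add_nonneg hC₁ hC₂
  have hDmem : ∀ s, 0 ≤ s → s ≤ t → MemLp (fun ω => 𝒜 s ω - 𝒜' s ω) 2 μ := by
    intro s hs hst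
    have hsI : s ∈ Set.Icc (0:ℝ) T := ⟨hs, hst.trans htT⟩
    exact ((h𝒜Lp s hsI).sub (h𝒜'Lp s hsI)).mono_exponent h2p
  have hDmeas : ∀ s, 0 ≤ s → s ≤ t → StronglyMeasurable[ℱ s] (fun ω => 𝒜 s ω - 𝒜' s ω) := by
    intro s hs hst
    exact (h𝒜meas s ⟨hs, hst.trans htT⟩).sub (h𝒜'meas s ⟨hs, hst.trans htT⟩)
  have hD0 : (fun ω => 𝒜 0 ω - 𝒜' 0 ω) =ᵐ[μ] 0 := by
    filter_upwards [h𝒜0, h𝒜'0] with ω h1 h2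
    simp [h1, h2]
  have hbd : ∀ s u : ℝ, 0 ≤ s → s ≤ u → u ≤ t →
      eLpNorm (fun ω => (𝒜 u ω - 𝒜' u ω) - (𝒜 s ω - 𝒜' s ω)) 2 μ ≤
        ENNReal.ofReal ((C₁ + C₂) * (u - s) ^ (1/2 + ε₂)) := by
    intro s u hs hsu hut
    have huT : u ≤ T := hut.trans htT
    have hsI : s ∈ Set.Icc (0:ℝ) T := ⟨hs, hsu.trans huT⟩
    have huI : u ∈ Set.Icc (0:ℝ) T := ⟨hs.trans hsu, huT⟩
    have hf : MemLp (fun ω => 𝒜 u ω - 𝒜 s ω - A s u ω) (ENNReal.ofReal p) μ :=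
      ((h𝒜Lp u huI).sub (h𝒜Lp s hsI)).sub (hLp s u hs hsu huT)
    have hg : MemLp (fun ω => 𝒜' u ω - 𝒜' s ω - A s u ω) (ENNReal.ofReal p) μ :=
      ((h𝒜'Lp u huI).sub (h𝒜'Lp s hsI)).sub (hLp s u hs hsu huT)
    have hx : (0:ℝ) ≤ (u - s) ^ (1/2 + ε₂) := Real.rpow_nonneg (by linarith) _
    have heq : (fun ω => (𝒜 u ω - 𝒜' u ω) - (𝒜 s ω - 𝒜' s ω)) =
        (fun ω => 𝒜 u ω - 𝒜 s ω - A s u ω) - (fun ω => 𝒜' u ω - 𝒜' s ω - A s u ω) := by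
      funext ω
      simp only [Pi.sub_apply]
      abel
    rw [heq]
    calc eLpNorm ((fun ω => 𝒜 u ω - 𝒜 s ω - A s u ω) -
            (fun ω => 𝒜' u ω - 𝒜' s ω - A s u ω)) 2 μ
        ≤ eLpNorm ((fun ω => 𝒜 u ω - 𝒜 s ω - A s u ω) -
            (fun ω => 𝒜' u ω - 𝒜' s ω - A s u ω)) (ENNReal.ofReal p) μ :=
          eLpNorm_le_eLpNorm_of_exponent_le h2p (hf.sub hg).aestronglyMeasurable
      _ ≤ eLpNorm (fun ω => 𝒜 u ω - 𝒜 s ω - A s u ω) (ENNReal.ofReal p) μ +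
          eLpNorm (fun ω => 𝒜' u ω - 𝒜' s ω - A s u ω) (ENNReal.ofReal p) μ :=
          eLpNorm_sub_le hf.aestronglyMeasurable hg.aestronglyMeasurable h1p
      _ ≤ ENNReal.ofReal (C₁ * (u - s) ^ (1/2 + ε₂)) +
          ENNReal.ofReal (C₂ * (u - s) ^ (1/2 + ε₂)) :=
          add_le_add (h𝒜bd s u hs hsu huT) (h𝒜'bd s u hs hsu huT)
      _ = ENNReal.ofReal ((C₁ + C₂) * (u - s) ^ (1/2 + ε₂)) := by
          rw [← ENNReal.ofReal_add (mul_nonneg hC₁ hx) (mul_nonneg hC₂ hx)]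
          ring_nf
  have hcond : ∀ s u : ℝ, 0 ≤ s → s ≤ u → u ≤ t →
      eLpNorm (μ[fun ω => (𝒜 u ω - 𝒜' u ω) - (𝒜 s ω - 𝒜' s ω) | ℱ s]) 2 μ ≤
        ENNReal.ofReal ((C₁ + C₂) * (u - s) ^ (1 + ε₁)) := by
    intro s u hs hsu hut
    have huT : u ≤ T := hut.trans htT
    have hsI : s ∈ Set.Icc (0:ℝ) T := ⟨hs, hsu.trans huT⟩
    have huI : u ∈ Set.Icc (0:ℝ) T := ⟨hs.trans hsu, huT⟩
    have hf : MemLp (fun ω => 𝒜 u ω - 𝒜 s ω - A s u ω) (ENNReal.ofReal p) μ :=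
      ((h𝒜Lp u huI).sub (h𝒜Lp s hsI)).sub (hLp s u hs hsu huT)
    have hg : MemLp (fun ω => 𝒜' u ω - 𝒜' s ω - A s u ω) (ENNReal.ofReal p) μ :=
      ((h𝒜'Lp u huI).sub (h𝒜'Lp s hsI)).sub (hLp s u hs hsu huT)
    have hx : (0:ℝ) ≤ (u - s) ^ (1 + ε₁) := Real.rpow_nonneg (by linarith) _
    have heq : (fun ω => (𝒜 u ω - 𝒜' u ω) - (𝒜 s ω - 𝒜' s ω)) =
        (fun ω => 𝒜 u ω - 𝒜 s ω - A s u ω) - (fun ω => 𝒜' u ω - 𝒜' s ω - A s u ω) := by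
      funext ω
      simp only [Pi.sub_apply]
      abel
    have hcsub : μ[fun ω => (𝒜 u ω - 𝒜' u ω) - (𝒜 s ω - 𝒜' s ω) | ℱ s] =ᵐ[μ]
        μ[fun ω => 𝒜 u ω - 𝒜 s ω - A s u ω | ℱ s] -
          μ[fun ω => 𝒜' u ω - 𝒜' s ω - A s u ω | ℱ s] := by
      rw [heq]
      exact condExp_sub (hf.integrable h1p) (hg.integrable h1p) _
    have ham : AEStronglyMeasurable (μ[fun ω => 𝒜 u ω - 𝒜 s ω - A s u ω | ℱ s]) μ :=
      (stronglyMeasurable_condExp.mono (ℱ.le s)).aestronglyMeasurable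
    have hbm : AEStronglyMeasurable (μ[fun ω => 𝒜' u ω - 𝒜' s ω - A s u ω | ℱ s]) μ :=
      (stronglyMeasurable_condExp.mono (ℱ.le s)).aestronglyMeasurable
    calc eLpNorm (μ[fun ω => (𝒜 u ω - 𝒜' u ω) - (𝒜 s ω - 𝒜' s ω) | ℱ s]) 2 μ
        = eLpNorm (μ[fun ω => 𝒜 u ω - 𝒜 s ω - A s u ω | ℱ s] -
            μ[fun ω => 𝒜' u ω - 𝒜' s ω - A s u ω | ℱ s]) 2 μ := eLpNorm_congr_ae hcsub
      _ ≤ eLpNorm (μ[fun ω => 𝒜 u ω - 𝒜 s ω - A s u ω | ℱ s] -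
            μ[fun ω => 𝒜' u ω - 𝒜' s ω - A s u ω | ℱ s]) (ENNReal.ofReal p) μ :=
          eLpNorm_le_eLpNorm_of_exponent_le h2p (ham.sub hbm)
      _ ≤ eLpNorm (μ[fun ω => 𝒜 u ω - 𝒜 s ω - A s u ω | ℱ s]) (ENNReal.ofReal p) μ +
          eLpNorm (μ[fun ω => 𝒜' u ω - 𝒜' s ω - A s u ω | ℱ s]) (ENNReal.ofReal p) μ :=
          eLpNorm_sub_le ham hbm h1p
      _ ≤ ENNReal.ofReal (C₁ * (u - s) ^ (1 + ε₁)) +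
          ENNReal.ofReal (C₂ * (u - s) ^ (1 + ε₁)) :=
          add_le_add (h𝒜cond s u hs hsu huT) (h𝒜'cond s u hs hsu huT)
      _ = ENNReal.ofReal ((C₁ + C₂) * (u - s) ^ (1 + ε₁)) := by
          rw [← ENNReal.ofReal_add (mul_nonneg hC₁ hx) (mul_nonneg hC₂ hx)]
          ring_nf
  have hfinal := ssl_main ℱ (fun s ω => 𝒜 s ω - 𝒜' s ω) t ht0 ε₂ ε₁ (C₁ + C₂)
    hε₂ hε₁ hC hDmeas hDmem hD0 hbd hcond
  filter_upwards [hfinal] with ω hω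
  have h0 : 𝒜 t ω - 𝒜' t ω = 0 := by simpa using hω
  exact sub_eq_zero.mp h0
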